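/- For additively separable hedonic games on n agents with general duplex valuations with parameter x > 2n - 3 (declaration domain D = all weight profiles with off-diagonal values in {-x, 0, 1}), every optimal mechanism is non-obviously manipulable. -/
import Mathlib


noncomputable section

open Finset

/-- A partition of the agents `Fin n`, given by the block (coalition) of each agent. -/
structure HGPartition (n : ℕ) where
  block : Fin n → Finset (Fin n)
  mem_block : ∀ i, i ∈ block i
  block_eq : ∀ i j, j ∈ block i → block j = block i

/-- ASHG utility of an agent with score row `wi` for a coalition `C` containing her. -/
def uA {n : ℕ} (wi : Fin n → ℝ) (C : Finset (Fin n)) : ℝ :=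
  ∑ j ∈ C, wi j

/-- FHG utility of an agent with score row `wi` for a coalition `C` containing her. -/
def uF {n : ℕ} (wi : Fin n → ℝ) (C : Finset (Fin n)) : ℝ :=
  (∑ j ∈ C, wi j) / C.card

/-- Utilitarian social welfare in ASHGs. -/
def swA {n : ℕ} (w : Fin n → Fin n → ℝ) (π : HGPartition n) : ℝ :=
  ∑ i, uA (w i) (π.block i)

/-- Utilitarian social welfare in FHGs. -/
def swF {n : ℕ} (w : Fin n → Fin n → ℝ) (π : HGPartition n) : ℝ :=
  ∑ i, uF (w i) (π.block i)

/-- A weight profile has zero scores on the diagonal. -/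
def ZeroDiag {n : ℕ} (w : Fin n → Fin n → ℝ) : Prop := ∀ i, w i i = 0

/-- General duplex valuations with parameter `x`: every off-diagonal score
lies in `{-x, 0, 1}`. -/
def GeneralDuplex {n : ℕ} (x : ℝ) (w : Fin n → Fin n → ℝ) : Prop :=
  ∀ i j : Fin n, i ≠ j → w i j = -x ∨ w i j = 0 ∨ w i j = 1

/-- The declaration domain of general duplex valuations with parameter `x`. -/
def DuplexProfile {n : ℕ} (x : ℝ) (w : Fin n → Fin n → ℝ) : Prop :=
  ZeroDiag w ∧ GeneralDuplex x w

/-- A feasible declaration row of agent `i` in the general duplex domain. -/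
def DuplexRow {n : ℕ} (x : ℝ) (i : Fin n) (r : Fin n → ℝ) : Prop :=
  r i = 0 ∧ ∀ j : Fin n, j ≠ i → r j = -x ∨ r j = 0 ∨ r j = 1

/-- The set of ASHG utilities (w.r.t. true row `wi`) agent `i` can obtain under `M`
when declaring `di`, as the others' declarations range over the duplex domain. -/
def utilSetX {n : ℕ} (x : ℝ) (M : (Fin n → Fin n → ℝ) → HGPartition n)
    (i : Fin n) (wi di : Fin n → ℝ) : Set ℝ :=
  {v : ℝ | ∃ d : Fin n → Fin n → ℝ, DuplexProfile x d ∧ d i = di ∧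
    v = uA wi ((M d).block i)}

/-- Non-obvious manipulability for ASHGs on the general duplex domain. -/
def NOM_X {n : ℕ} (x : ℝ) (M : (Fin n → Fin n → ℝ) → HGPartition n) : Prop :=
  ∀ (i : Fin n) (wi di : Fin n → ℝ), DuplexRow x i wi → DuplexRow x i di →
    sSup (utilSetX x M i wi di) ≤ sSup (utilSetX x M i wi wi) ∧
    sInf (utilSetX x M i wi di) ≤ sInf (utilSetX x M i wi wi)

/-- A mechanism on the general duplex domain is optimal if it always outputs a
social-welfare maximizing partition. -/
def OptimalX {n : ℕ} (x : ℝ) (M : (Fin n → Fin n → ℝ) → HGPartition n) : Prop :=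
  ∀ d : Fin n → Fin n → ℝ, DuplexProfile x d →
    ∀ π : HGPartition n, swA d π ≤ swA d (M d)

def removeAgent {n : ℕ} (π : HGPartition n) (a : Fin n) : HGPartition n where
  block j := if j = a then {a} else (π.block j).erase a
  mem_block j := by
    by_cases h : j = a
    · simp [h]
    · simp [h, Finset.mem_erase, π.mem_block j]
  block_eq j k hk := by
    by_cases h : j = a
    · subst h; simp at hk; simp [hk]
    · simp only [if_neg h, Finset.mem_erase] at hk
      have hk1 : k ≠ a := hk.1
      have heq := π.block_eq j k hk.2
      simp [hk1, h, heq]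

lemma no_neg_edge {n : ℕ} {x : ℝ} (hx : 2*(n:ℝ) - 3 < x)
    {d : Fin n → Fin n → ℝ} (hd : DuplexProfile x d)
    {π : HGPartition n} (hopt : ∀ π', swA d π' ≤ swA d π)
    {a b : Fin n} (hab : a ≠ b) (hb : b ∈ π.block a) : d a b ≠ -x := by
  intro hneg
  set C := π.block a with hC
  have ha : a ∈ C := π.mem_block a
  have hblockC : ∀ i ∈ C, π.block i = C := fun i hi => π.block_eq a i hi
  have hnotinC : ∀ i, i ∉ C → a ∉ π.block i := by
    intro i hi hai
    apply hi
    rw [hC, π.block_eq i a hai]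
    exact π.mem_block i
  -- n ≥ 2 and x > 1
  have hn2 : (2:ℝ) ≤ n := by
    have : Nontrivial (Fin n) := ⟨⟨a, b, hab⟩⟩
    have h1 : 1 < Fintype.card (Fin n) := Fintype.one_lt_card
    rw [Fintype.card_fin] at h1
    exact_mod_cast h1
  have hx1 : 1 < x := by linarith
  -- welfare difference
  have hdiff : swA d π - swA d (removeAgent π a)
      = uA (d a) C + ∑ j ∈ C.erase a, d j a := by
    have hsub : swA d π - swA d (removeAgent π a)
        = ∑ i, (uA (d i) (π.block i) - uA (d i) ((removeAgent π a).block i)) := by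
      rw [swA, swA, ← Finset.sum_sub_distrib]
    rw [hsub]
    rw [← Finset.sum_subset (Finset.subset_univ C)]
    · rw [← Finset.add_sum_erase _ _ ha]
      have h1 : uA (d a) (π.block a) - uA (d a) ((removeAgent π a).block a)
          = uA (d a) C := by
        simp [removeAgent, uA, hd.1 a, ← hC]
      rw [h1]
      congr 1
      apply Finset.sum_congr rfl
      intro i hi
      have hia : i ≠ a := (Finset.mem_erase.mp hi).1
      have hiC : i ∈ C := (Finset.mem_erase.mp hi).2
      have hb1 : π.block i = C := hblockC i hiC
      have hb2 : (removeAgent π a).block i = C.erase a := by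
        simp [removeAgent, hia, hb1]
      rw [hb1, hb2, uA, uA, ← Finset.sum_erase_add _ _ ha]
      ring
    · intro i _ hi
      have hia : i ≠ a := fun h => hi (h ▸ ha)
      have h2 : (removeAgent π a).block i = π.block i := by
        simp [removeAgent, hia, Finset.erase_eq_of_notMem (hnotinC i hi)]
      rw [h2]; ring
  -- bound the difference
  have hbC : b ∈ C.erase a := Finset.mem_erase.mpr ⟨Ne.symm hab, hb⟩
  have hcard : (C.card : ℝ) ≤ n := by
    have := Finset.card_le_card (Finset.subset_univ C)
    simp at this
    exact_mod_cast this
  have hc2 : 2 ≤ C.card := by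
    have : ({a, b} : Finset (Fin n)) ⊆ C := by
      intro z hz; simp at hz; rcases hz with h | h <;> simp [h, ha, hb]
    calc 2 = ({a, b} : Finset (Fin n)).card := by rw [Finset.card_insert_of_notMem (by simp [hab]), Finset.card_singleton]
    _ ≤ C.card := Finset.card_le_card this
  have hcardE : ((C.erase a).card : ℝ) ≤ (n:ℝ) - 1 := by
    rw [Finset.card_erase_of_mem ha]
    have : (C.card - 1 : ℕ) = C.card - 1 := rfl
    push_cast [Nat.cast_sub (by omega : 1 ≤ C.card)]
    linarith
  have hcardE2 : (((C.erase a).erase b).card : ℝ) ≤ (n:ℝ) - 2 := by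
    rw [Finset.card_erase_of_mem hbC, Finset.card_erase_of_mem ha]
    push_cast [Nat.cast_sub (by omega : 1 ≤ C.card - 1), Nat.cast_sub (by omega : 1 ≤ C.card)]
    linarith
  have hle1 : ∀ j ∈ (C.erase a).erase b, d a j ≤ 1 := by
    intro j hj
    have hja : j ≠ a := (Finset.mem_erase.mp (Finset.mem_erase.mp hj).2).1
    rcases hd.2 a j (Ne.symm hja) with h | h | h <;> rw [h] <;> linarith
  have hle2 : ∀ j ∈ C.erase a, d j a ≤ 1 := by
    intro j hj
    have hja : j ≠ a := (Finset.mem_erase.mp hj).1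
    rcases hd.2 j a hja with h | h | h <;> rw [h] <;> linarith
  have hsum1 : ∑ j ∈ (C.erase a).erase b, d a j ≤ (n:ℝ) - 2 := by
    calc ∑ j ∈ (C.erase a).erase b, d a j ≤ ((C.erase a).erase b).card • (1:ℝ) :=
          Finset.sum_le_card_nsmul _ _ _ hle1
    _ = (((C.erase a).erase b).card : ℝ) := by simp
    _ ≤ (n:ℝ) - 2 := hcardE2
  have hsum2 : ∑ j ∈ C.erase a, d j a ≤ (n:ℝ) - 1 := by
    calc ∑ j ∈ C.erase a, d j a ≤ (C.erase a).card • (1:ℝ) :=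
          Finset.sum_le_card_nsmul _ _ _ hle2
    _ = ((C.erase a).card : ℝ) := by simp
    _ ≤ (n:ℝ) - 1 := hcardE
  have huAC : uA (d a) C = d a b + ∑ j ∈ (C.erase a).erase b, d a j := by
    rw [uA, ← Finset.add_sum_erase _ _ ha, hd.1 a, ← Finset.add_sum_erase _ _ hbC]
    ring
  have hneg' : swA d π - swA d (removeAgent π a) < 0 := by
    rw [hdiff, huAC, hneg]
    linarith
  have := hopt (removeAgent π a)
  linarith

def groupPartition {n : ℕ} (S : Finset (Fin n)) : HGPartition n where
  block j := if j ∈ S then S else {j}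
  mem_block j := by by_cases h : j ∈ S <;> simp [h]
  block_eq j k hk := by
    by_cases h : j ∈ S
    · simp only [if_pos h] at hk
      simp [h, hk]
    · simp only [if_neg h, Finset.mem_singleton] at hk
      subst hk; rfl

lemma forced_block {n : ℕ} {x : ℝ} (hx : 2*(n:ℝ) - 3 < x)
    {d : Fin n → Fin n → ℝ} (hd : DuplexProfile x d)
    {π : HGPartition n} (hopt : ∀ π', swA d π' ≤ swA d π)
    (S : Finset (Fin n)) {i : Fin n} (hi : i ∈ S)
    (hS1 : ∀ a ∈ S, ∀ b ∈ S, a ≠ b → d a b = 1)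
    (hS2 : ∀ a, a ∉ S → ∀ b, b ≠ a → d a b = -x) :
    π.block i = S := by
  have hne : ∀ (a b : Fin n), a ≠ b → b ∈ π.block a → d a b ≠ -x :=
    fun a b hab hb => no_neg_edge hx hd hopt hab hb
  -- blocks of members of S are inside S
  have hBsub : ∀ j ∈ S, π.block j ⊆ S := by
    intro j hj o ho
    by_contra hoS
    have hoj : o ≠ j := fun h => hoS (h ▸ hj)
    have hjo : j ∈ π.block o := by rw [π.block_eq j o ho]; exact π.mem_block j
    exact hne o j hoj hjo (hS2 o hoS j (Ne.symm hoj))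
  -- blocks of non-members are singletons
  have hBsing : ∀ j, j ∉ S → π.block j = {j} := by
    intro j hj
    apply Finset.eq_singleton_iff_unique_mem.mpr
    refine ⟨π.mem_block j, fun b hb => ?_⟩
    by_contra hbj
    exact hne j b (Ne.symm hbj) hb (hS2 j hj b hbj)
  -- utility of members
  have hval : ∀ j ∈ S, ∀ B : Finset (Fin n), j ∈ B → B ⊆ S →
      uA (d j) B = (B.card : ℝ) - 1 := by
    intro j hj B hjB hBS
    rw [uA, ← Finset.add_sum_erase _ _ hjB, hd.1 j]
    have : ∀ l ∈ B.erase j, d j l = 1 := by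
      intro l hl
      exact hS1 j hj l (hBS (Finset.mem_erase.mp hl).2) (Ne.symm (Finset.mem_erase.mp hl).1)
    rw [Finset.sum_congr rfl this, Finset.sum_const, Finset.card_erase_of_mem hjB]
    have h1 : 1 ≤ B.card := Finset.card_pos.mpr ⟨j, hjB⟩
    rw [nsmul_eq_mul, Nat.cast_sub h1]
    push_cast
    ring
  -- welfare of π
  have hswπ : swA d π = ∑ j ∈ S, ((π.block j).card - 1 : ℝ) := by
    rw [swA, ← Finset.sum_subset (Finset.subset_univ S)]
    · exact Finset.sum_congr rfl fun j hj =>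
        hval j hj _ (π.mem_block j) (hBsub j hj)
    · intro j _ hj
      rw [hBsing j hj]
      simp [uA, hd.1 j]
  -- welfare of the grouped partition
  have hswg : swA d (groupPartition S) = ∑ j ∈ S, ((S.card : ℝ) - 1) := by
    rw [swA, ← Finset.sum_subset (Finset.subset_univ S)]
    · apply Finset.sum_congr rfl
      intro j hj
      have hb : (groupPartition S).block j = S := by simp [groupPartition, hj]
      rw [hb]
      exact hval j hj S hj (Finset.Subset.refl S)
    · intro j _ hj
      have hb : (groupPartition S).block j = {j} := by simp [groupPartition, hj]
      rw [hb]
      simp [uA, hd.1 j]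
  -- compare
  have hcmp := hopt (groupPartition S)
  rw [hswπ, hswg] at hcmp
  have hzero : ∑ j ∈ S, ((S.card : ℝ) - (π.block j).card) ≤ 0 := by
    have : ∑ j ∈ S, ((S.card : ℝ) - (π.block j).card)
        = ∑ j ∈ S, ((S.card : ℝ) - 1) - ∑ j ∈ S, ((π.block j).card - 1 : ℝ) := by
      rw [← Finset.sum_sub_distrib]; apply Finset.sum_congr rfl; intros; ring
    rw [this]; linarith
  have hnonneg : ∀ j ∈ S, (0:ℝ) ≤ (S.card : ℝ) - (π.block j).card := by
    intro j hj
    have := Finset.card_le_card (hBsub j hj)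
    have : ((π.block j).card : ℝ) ≤ S.card := by exact_mod_cast this
    linarith
  have hall := (Finset.sum_eq_zero_iff_of_nonneg hnonneg).mp
    (le_antisymm hzero (Finset.sum_nonneg hnonneg))
  have hcardi : (π.block i).card = S.card := by
    have := hall i hi
    have : ((π.block i).card : ℝ) = S.card := by linarith
    exact_mod_cast this
  exact Finset.eq_of_subset_of_card_le (hBsub i hi) (le_of_eq hcardi.symm)

theorem optimal_implies_NOM_duplex_large_x (n : ℕ) (x : ℝ)
    (hx : 2 * (n : ℝ) - 3 < x)
    (M : (Fin n → Fin n → ℝ) → HGPartition n) (hM : OptimalX x M) :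
    NOM_X x M := by
  intro i wi di hwi hdi
  have hn1 : (1:ℝ) ≤ n := by exact_mod_cast i.pos
  have hxm1 : -x < 1 := by linarith
  set F := Finset.univ.filter (fun j => wi j = (1:ℝ)) with hF
  set k : ℝ := (F.card : ℝ) with hk
  -- upper bound k on every attainable utility
  have hub : ∀ di' v, v ∈ utilSetX x M i wi di' → v ≤ k := by
    rintro di' v ⟨d, hd, hdi', rfl⟩
    rw [uA]
    calc ∑ j ∈ (M d).block i, wi j
        ≤ ∑ j ∈ (M d).block i, (if wi j = 1 then (1:ℝ) else 0) := by
          apply Finset.sum_le_sum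
          intro j _
          by_cases h : wi j = 1
          · simp [h]
          · rw [if_neg h]
            by_cases hji : j = i
            · rw [hji, hwi.1]
            · have hn2 : (2:ℝ) ≤ n := by
                have : Nontrivial (Fin n) := ⟨⟨j, i, hji⟩⟩
                have h1 : 1 < Fintype.card (Fin n) := Fintype.one_lt_card
                rw [Fintype.card_fin] at h1
                exact_mod_cast h1
              rcases hwi.2 j hji with h' | h' | h'
              · rw [h']; linarith
              · rw [h']
              · exact absurd h' h
      _ = (((M d).block i).filter (fun j => wi j = 1)).card := by
          rw [Finset.sum_boole]
      _ ≤ k := by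
          rw [hk, hF]
          have := Finset.card_le_card
            (Finset.filter_subset_filter (fun j => wi j = (1:ℝ))
              (Finset.subset_univ ((M d).block i)))
          exact_mod_cast this
  -- lower bound on every attainable utility
  have hlb : ∀ di', ∀ v ∈ utilSetX x M i wi di', (n:ℝ) * (-(|x|+1)) ≤ v := by
    rintro di' v ⟨d, hd, hdi', rfl⟩
    have hbase : ∀ j, -(|x|+1) ≤ wi j := by
      intro j
      have hax := abs_nonneg x
      have hax2 := le_abs_self x
      by_cases hji : j = i
      · rw [hji, hwi.1]; linarith
      · rcases hwi.2 j hji with h' | h' | h' <;> rw [h'] <;> linarith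
    rw [uA]
    have h1 : ((M d).block i).card • (-(|x|+1)) ≤ ∑ j ∈ (M d).block i, wi j :=
      Finset.card_nsmul_le_sum _ _ _ (fun j _ => hbase j)
    have hcard : (((M d).block i).card : ℝ) ≤ n := by
      have := Finset.card_le_card (Finset.subset_univ ((M d).block i))
      simp only [Finset.card_univ, Fintype.card_fin] at this
      exact_mod_cast this
    have h2 : (n:ℝ) * (-(|x|+1)) ≤ (((M d).block i).card : ℝ) * (-(|x|+1)) := by
      apply mul_le_mul_of_nonpos_right hcard
      have := abs_nonneg x
      linarith
    rw [nsmul_eq_mul] at h1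
    linarith
  -- 0 is attainable for any declaration
  have hzero_mem : ∀ di', DuplexRow x i di' → (0:ℝ) ∈ utilSetX x M i wi di' := by
    intro di' hdi'
    set d0 : Fin n → Fin n → ℝ :=
      fun j l => if j = i then di' l else if l = j then 0 else -x with hd0def
    have hd0 : DuplexProfile x d0 := by
      constructor
      · intro j
        by_cases h : j = i
        · simp [hd0def, h, hdi'.1]
        · simp [hd0def, h]
      · intro j l hjl
        by_cases h : j = i
        · subst h
          simp only [hd0def, if_pos rfl]
          exact hdi'.2 l (Ne.symm hjl)
        · left
          simp [hd0def, h, Ne.symm hjl]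
    have hblock : (M d0).block i = {i} := by
      apply Finset.eq_singleton_iff_unique_mem.mpr
      refine ⟨(M d0).mem_block i, fun b hb => ?_⟩
      by_contra hbi
      have hib : i ∈ (M d0).block b := by
        rw [(M d0).block_eq i b hb]; exact (M d0).mem_block i
      have := no_neg_edge hx hd0 (hM d0 hd0) (Ne.symm (Ne.symm hbi)) hib
      apply this
      simp [hd0def, hbi, (Ne.symm hbi : i ≠ b)]
    refine ⟨d0, hd0, ?_, ?_⟩
    · funext l; simp [hd0def]
    · rw [hblock]
      simp [uA, hwi.1]
  -- truthful utilities are nonnegative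
  have htruth_nonneg : ∀ v ∈ utilSetX x M i wi wi, (0:ℝ) ≤ v := by
    rintro v ⟨d, hd, hdiw, rfl⟩
    rw [uA]
    apply Finset.sum_nonneg
    intro j hj
    by_cases hji : j = i
    · rw [hji, hwi.1]
    · have hne := no_neg_edge hx hd (hM d hd) (fun h => hji (h.symm)) hj
      rw [hdiw] at hne
      rcases hwi.2 j hji with h' | h' | h'
      · exact absurd h' hne
      · rw [h']
      · rw [h']; linarith
  -- k is attainable truthfully
  have hk_mem : k ∈ utilSetX x M i wi wi := by
    set S : Finset (Fin n) := insert i F with hS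
    have hiS : i ∈ S := Finset.mem_insert_self i F
    set d1 : Fin n → Fin n → ℝ :=
      fun j l => if j = i then wi l
        else if l = j then 0 else if j ∈ S ∧ l ∈ S then 1 else -x with hd1def
    have hd1 : DuplexProfile x d1 := by
      constructor
      · intro j
        by_cases h : j = i
        · simp [hd1def, h, hwi.1]
        · simp [hd1def, h]
      · intro j l hjl
        by_cases h : j = i
        · subst h
          simp only [hd1def, if_pos rfl]
          exact hwi.2 l (Ne.symm hjl)
        · by_cases h2 : j ∈ S ∧ l ∈ S
          · right; right; simp [hd1def, h, Ne.symm hjl, h2]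
          · left; simp [hd1def, h, Ne.symm hjl, h2]
    have hS1 : ∀ a ∈ S, ∀ b ∈ S, a ≠ b → d1 a b = 1 := by
      intro a ha b hb hab
      by_cases h : a = i
      · subst h
        have hbF : b ∈ F := by
          rcases Finset.mem_insert.mp hb with h' | h'
          · exact absurd h'.symm hab
          · exact h'
        have := (Finset.mem_filter.mp hbF).2
        simp [hd1def, this]
      · simp [hd1def, h, (Ne.symm hab : b ≠ a), ha, hb]
    have hS2 : ∀ a, a ∉ S → ∀ b, b ≠ a → d1 a b = -x := by
      intro a ha b hba
      have hai : a ≠ i := fun h => ha (h ▸ hiS)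
      have : ¬ (a ∈ S ∧ b ∈ S) := fun h => ha h.1
      simp [hd1def, hai, hba, this]
    have hblock : (M d1).block i = S :=
      forced_block hx hd1 (hM d1 hd1) S hiS hS1 hS2
    refine ⟨d1, hd1, ?_, ?_⟩
    · funext l; simp [hd1def]
    · rw [hblock, hS, uA]
      have hiF : i ∉ F := by
        simp [hF, hwi.1]
      rw [Finset.sum_insert hiF, hwi.1]
      have : ∀ j ∈ F, wi j = 1 := fun j hj => (Finset.mem_filter.mp hj).2
      rw [Finset.sum_congr rfl this, Finset.sum_const, nsmul_eq_mul]
      simp [hk]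
  -- assemble
  have hdev_ne : (utilSetX x M i wi di).Nonempty := ⟨0, hzero_mem di hdi⟩
  have htr_ne : (utilSetX x M i wi wi).Nonempty := ⟨k, hk_mem⟩
  constructor
  · calc sSup (utilSetX x M i wi di) ≤ k := csSup_le hdev_ne (hub di)
      _ ≤ sSup (utilSetX x M i wi wi) :=
        le_csSup ⟨k, fun v hv => hub wi v hv⟩ hk_mem
  · calc sInf (utilSetX x M i wi di) ≤ 0 :=
        csInf_le ⟨(n:ℝ) * (-(|x|+1)), fun v hv => hlb di v hv⟩ (hzero_mem di hdi)
      _ ≤ sInf (utilSetX x M i wi wi) := le_csInf htr_ne htruth_nonneg
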